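/- arXiv:2309.08512 — 5 statements merged into one kernel-verified Lean document; each statement's English description precedes it below -/
import Mathlib

section
/- Let G be a finite group and let B ∈ (ℤ≥0[G])^{V×V} be a matrix such that B^ℓ ∈ u_G·(ℤ≥0)^{V×V} for some ℓ ∈ ℕ. Then the matrices ℰ(B) and 𝒜(B) are shift equivalent over ℤ≥0 with lag ℓ: explicitly, setting R := I_{V×V} ⊗ 𝟙_G^⊤ (the V×(V×G) matrix with R_{i,(j,g)} = δ_{ij}) and S := π_1(B^ℓ) ⊗ 𝟙_G (the (V×G)×V matrix with S_{(i,g),j} = π_1(B^ℓ)_{i,j}), one has 𝒜(B)^ℓ = RS, ℰ(B)^ℓ = SR, 𝒜(B)·R = R·ℰ(B), and S·𝒜(B) = ℰ(B)·S. -/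
open MonoidAlgebra Matrix

noncomputable def extMat {G V : Type*} [Group G]
    (B : Matrix V V (MonoidAlgebra ℤ G)) : Matrix (V × G) (V × G) ℤ :=
  fun p q => (B p.1 q.1).coeff (p.2⁻¹ * q.2)

noncomputable def augMat {G V : Type*} [Group G] [Fintype G]
    (B : Matrix V V (MonoidAlgebra ℤ G)) : Matrix V V ℤ :=
  fun i j => ∑ g : G, (B i j).coeff g

noncomputable def uG (G : Type*) [Group G] [Fintype G] : MonoidAlgebra ℤ G :=
  ∑ g : G, single g 1

lemma uG_apply {G : Type*} [Group G] [Fintype G] [DecidableEq G] (g : G) :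
    (uG G).coeff g = 1 := by
  rw [uG, MonoidAlgebra.coeff_sum, Finsupp.finset_sum_apply]
  simp [MonoidAlgebra.coeff_single, Finsupp.single_apply]

lemma mulApplyFin {G : Type*} [Group G] [Fintype G]
    (f h : MonoidAlgebra ℤ G) (x : G) :
    (f * h).coeff x = ∑ a : G, f.coeff a * h.coeff (a⁻¹ * x) := by
  rw [MonoidAlgebra.coeff_mul_apply_left, Finsupp.sum_fintype]
  intro a; simp

lemma extMat_mul {G V : Type*} [Group G] [Fintype G] [Fintype V]
    (A C : Matrix V V (MonoidAlgebra ℤ G)) :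
    extMat (A * C) = extMat A * extMat C := by
  ext p q
  show ((A * C) p.1 q.1).coeff (p.2⁻¹ * q.2) = _
  rw [Matrix.mul_apply, Matrix.mul_apply, MonoidAlgebra.coeff_sum, Finsupp.finset_sum_apply,
    Fintype.sum_prod_type]
  refine Finset.sum_congr rfl fun k _ => ?_
  rw [mulApplyFin]
  refine Fintype.sum_equiv (Equiv.mulLeft p.2) _ _ fun a => ?_
  simp only [extMat, Equiv.coe_mulLeft, inv_mul_cancel_left]
  congr 1
  group

lemma augMat_mul {G V : Type*} [Group G] [Fintype G] [Fintype V]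
    (A C : Matrix V V (MonoidAlgebra ℤ G)) :
    augMat (A * C) = augMat A * augMat C := by
  ext i j
  simp only [augMat, Matrix.mul_apply]
  have : ∀ g : G, ((∑ k : V, A i k * C k j) : MonoidAlgebra ℤ G).coeff g
      = ∑ k : V, (A i k * C k j).coeff g := fun g => by rw [MonoidAlgebra.coeff_sum, Finsupp.finset_sum_apply]
  simp_rw [this]
  rw [Finset.sum_comm]
  refine Finset.sum_congr rfl fun k _ => ?_
  calc ∑ g : G, (A i k * C k j).coeff g
      = ∑ g : G, ∑ a : G, (A i k).coeff a * (C k j).coeff (a⁻¹ * g) := by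
        simp_rw [mulApplyFin]
    _ = ∑ a : G, (A i k).coeff a * ∑ g : G, (C k j).coeff (a⁻¹ * g) := by
        rw [Finset.sum_comm]; simp [Finset.mul_sum]
    _ = (∑ a : G, (A i k).coeff a) * ∑ g : G, (C k j).coeff g := by
        rw [Finset.sum_mul]
        refine Finset.sum_congr rfl fun a _ => ?_
        congr 1
        exact Fintype.sum_equiv (Equiv.mulLeft a⁻¹) _ _ fun g => rfl

lemma extMat_one {G V : Type*} [Group G] [Fintype G] [DecidableEq G]
    [Fintype V] [DecidableEq V] :
    extMat (1 : Matrix V V (MonoidAlgebra ℤ G)) = 1 := by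
  ext p q
  simp only [extMat, Matrix.one_apply]
  by_cases h : p.1 = q.1
  · rw [if_pos h]
    rw [MonoidAlgebra.one_def, MonoidAlgebra.coeff_single, Finsupp.single_apply]
    by_cases h2 : p.2 = q.2
    · simp [h2, Prod.ext_iff, h]
    · have : ¬ (1 : G) = p.2⁻¹ * q.2 := by
        intro hc; exact h2 (by rw [← mul_left_cancel_iff (a := p.2⁻¹)]; simp [← hc])
      simp [this, Prod.ext_iff, h2]
  · have : p ≠ q := fun hc => h (by rw [hc])
    simp [h, this, Matrix.one_apply]

lemma augMat_one {G V : Type*} [Group G] [Fintype G] [DecidableEq G]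
    [Fintype V] [DecidableEq V] :
    augMat (1 : Matrix V V (MonoidAlgebra ℤ G)) = 1 := by
  ext i j
  simp only [augMat, Matrix.one_apply]
  by_cases h : i = j
  · simp [h, MonoidAlgebra.one_def, MonoidAlgebra.coeff_single, Finsupp.single_apply]
  · simp [h]

lemma extMat_pow {G V : Type*} [Group G] [Fintype G] [DecidableEq G]
    [Fintype V] [DecidableEq V] (B : Matrix V V (MonoidAlgebra ℤ G)) (n : ℕ) :
    extMat (B ^ n) = extMat B ^ n := by
  induction n with
  | zero => simpa using extMat_one
  | succ n ih => rw [pow_succ, pow_succ, extMat_mul, ih]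

lemma augMat_pow {G V : Type*} [Group G] [Fintype G] [DecidableEq G]
    [Fintype V] [DecidableEq V] (B : Matrix V V (MonoidAlgebra ℤ G)) (n : ℕ) :
    augMat (B ^ n) = augMat B ^ n := by
  induction n with
  | zero => simpa using augMat_one
  | succ n ih => rw [pow_succ, pow_succ, augMat_mul, ih]

theorem ext_shift_equivalent_aug {G V : Type*} [Group G] [Fintype G]
    [DecidableEq G] [Fintype V] [DecidableEq V]
    (B : Matrix V V (MonoidAlgebra ℤ G))
    (hpos : ∀ i j (g : G), 0 ≤ (B i j).coeff g)
    (ℓ : ℕ) (hℓ : ∀ i j, ∃ c : ℤ, 0 ≤ c ∧ (B ^ ℓ) i j = c • uG G) :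
    let R : Matrix V (V × G) ℤ := fun i p => if p.1 = i then 1 else 0
    let S : Matrix (V × G) V ℤ := fun p j => ((B ^ ℓ) p.1 j).coeff (1 : G)
    (augMat B) ^ ℓ = R * S ∧ (extMat B) ^ ℓ = S * R ∧
      (augMat B) * R = R * (extMat B) ∧ S * (augMat B) = (extMat B) * S := by
  intro R S
  have hconst : ∀ i j (g : G), ((B ^ ℓ) i j).coeff g = ((B ^ ℓ) i j).coeff (1 : G) := by
    intro i j g
    obtain ⟨c, -, hc⟩ := hℓ i j
    rw [hc, MonoidAlgebra.coeff_smul_apply, MonoidAlgebra.coeff_smul_apply, uG_apply, uG_apply]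
  refine ⟨?_, ?_, ?_, ?_⟩
  · -- augMat B ^ ℓ = R * S
    rw [← augMat_pow]
    ext i j
    simp only [Matrix.mul_apply]
    simp only [augMat, Matrix.mul_apply, R, S, Fintype.sum_prod_type, ite_mul,
      one_mul, zero_mul]
    rw [Finset.sum_comm]
    simp only [Finset.sum_ite_eq, Finset.sum_ite_eq', Finset.mem_univ, if_true]
    exact Finset.sum_congr rfl fun g _ => hconst i j g
  · -- extMat B ^ ℓ = S * R
    rw [← extMat_pow]
    ext p q
    simp only [Matrix.mul_apply]
    simp only [extMat, Matrix.mul_apply, R, S, mul_ite, mul_one, mul_zero]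
    simp only [Finset.sum_ite_eq, Finset.sum_ite_eq', Finset.mem_univ, if_true]
    exact hconst p.1 q.1 _
  · -- augMat B * R = R * extMat B
    ext i q
    simp only [Matrix.mul_apply]
    simp only [Matrix.mul_apply, R, extMat, Fintype.sum_prod_type, mul_ite,
      mul_one, mul_zero, ite_mul, one_mul, zero_mul]
    simp only [Finset.sum_ite_eq, Finset.sum_ite_eq', Finset.mem_univ, if_true]
    rw [Finset.sum_comm]
    simp only [Finset.sum_ite_eq, Finset.sum_ite_eq', Finset.mem_univ, if_true]
    simp only [augMat]
    refine Fintype.sum_equiv ((Equiv.inv G).trans (Equiv.mulLeft q.2)) _ _ fun h => ?_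
    simp
  · -- S * augMat B = extMat B * S
    ext p j
    have key : ∀ y : G,
        ((B ^ (ℓ + 1)) p.1 j).coeff y = ∑ k, ((B ^ ℓ) p.1 k).coeff 1 * ∑ g : G, (B k j).coeff g := by
      intro y
      rw [pow_succ, Matrix.mul_apply, MonoidAlgebra.coeff_sum, Finsupp.finset_sum_apply]
      refine Finset.sum_congr rfl fun k _ => ?_
      rw [mulApplyFin, Finset.mul_sum]
      refine Fintype.sum_equiv ((Equiv.inv G).trans (Equiv.mulRight y)) _ _ fun a => ?_
      simp only [Equiv.trans_apply, Equiv.inv_apply, Equiv.coe_mulRight]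
      rw [hconst p.1 k a]
    have key2 : ∀ y : G, ((B ^ (ℓ + 1)) p.1 j).coeff (p.2⁻¹ * y)
        = ∑ k, (∑ g : G, (B p.1 k).coeff (p.2⁻¹ * g)) * ((B ^ ℓ) k j).coeff 1 := by
      intro y
      rw [pow_succ', Matrix.mul_apply, MonoidAlgebra.coeff_sum, Finsupp.finset_sum_apply]
      refine Finset.sum_congr rfl fun k _ => ?_
      rw [mulApplyFin, Finset.sum_mul]
      refine Fintype.sum_equiv (Equiv.mulLeft p.2) _ _ fun a => ?_
      simp only [Equiv.coe_mulLeft, inv_mul_cancel_left]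
      rw [hconst k j]
    simp only [Matrix.mul_apply]
    simp only [Matrix.mul_apply, S, extMat, augMat, Fintype.sum_prod_type]
    rw [← key (p.2⁻¹ * 1), key2 1]
    simp_rw [Finset.sum_mul]
end

section
/- Let G be a finite group, B a square matrix over ℤ[G] indexed by V. For each g ∈ G let P_g be the right-regular-representation permutation matrix on G. If the matrix Q := Σ_{g∈G} π_g(B) ⊗ Q_g is nilpotent, where the Q_g are obtained from P_g by restricting to the orthogonal complement of the all-ones vector in ℂ^G (in any fixed basis extending the all-ones vector to a basis of ℂ^G), then B^k has all entries in u_G·ℤ for k equal to the size of Q, namely k = |V|(|G|−1). -/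
open MonoidAlgebra Matrix Kronecker

noncomputable def coeffMat {G V : Type*} [Group G]
    (g : G) (B : Matrix V V (MonoidAlgebra ℤ G)) : Matrix V V ℤ :=
  fun i j => (B i j).coeff g

/-- The complex permutation matrix of right multiplication by `g`. -/
def permMatC (G : Type*) [Group G] [DecidableEq G] (g : G) : Matrix G G ℂ :=
  fun h k => if k = h * g then 1 else 0

/-- A nilpotent complex matrix to the power of its size is zero. -/
lemma matrix_pow_card_eq_zero {n : Type*} [Fintype n] [DecidableEq n]
    (X : Matrix n n ℂ) (h : IsNilpotent X) : X ^ Fintype.card n = 0 := by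
  have h1 := X.isNilpotent_charpoly_sub_pow_of_isNilpotent h
  have h2 : X.charpoly = Polynomial.X ^ Fintype.card n :=
    sub_eq_zero.mp h1.eq_zero
  have h3 := X.aeval_self_charpoly
  rw [h2] at h3
  simpa using h3

lemma sum_subtype_ne_one {G : Type*} [Fintype G] [DecidableEq G] [One G]
    {M : Type*} [AddCommMonoid M] (f : G → M) (h0 : f 1 = 0) :
    ∑ g : G, f g = ∑ a : {h : G // h ≠ 1}, f a.1 := by
  have h1 : ∑ x ∈ Finset.univ.filter (fun h : G => h ≠ 1), f x
      = ∑ a : {h : G // h ≠ 1}, f a.1 := by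
    rw [Finset.sum_subtype (p := fun h : G => h ≠ 1)
      (Finset.univ.filter (fun h : G => h ≠ 1)) (by simp) f]
  rw [← h1, ← Finset.sum_filter_add_sum_filter_not Finset.univ (fun h : G => h = 1) f]
  simp [Finset.filter_eq', h0]

theorem pow_entries_in_uG_of_nilpotent {G V : Type*} [Group G] [Fintype G]
    [DecidableEq G] [Fintype V] [DecidableEq V]
    (B : Matrix V V (MonoidAlgebra ℤ G))
    -- a fixed invertible base-change matrix whose column at the index `1 : G`
    -- is the all-ones vector
    (F : Matrix G G ℂ) (hF : IsUnit F.det)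
    (hFone : ∀ h : G, F h 1 = 1)
    -- in this basis every `F⁻¹ P_g F` is block triangular with a `1` in the
    -- top-left corner
    (hblock : ∀ g : G, (F⁻¹ * permMatC G g * F) 1 1 = 1 ∧
      ∀ h : G, h ≠ 1 → (F⁻¹ * permMatC G g * F) h 1 = 0)
    -- the blocks `Q_g` obtained by restricting away the distinguished index
    (Q : ∀ _ : G, Matrix {h : G // h ≠ 1} {h : G // h ≠ 1} ℂ)
    (hQ : ∀ (g : G) (a b : {h : G // h ≠ 1}),
      Q g a b = (F⁻¹ * permMatC G g * F) a.1 b.1)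
    -- if `Σ_g π_g(B) ⊗ Q_g` is nilpotent ...
    (hnil : IsNilpotent (∑ g : G,
      ((coeffMat g B).map (Int.cast : ℤ → ℂ)) ⊗ₖ Q g)) :
    -- ... then `B^k ∈ u_G · ℤ` for `k = |V|(|G|-1)`, the size of `Q`
    ∀ i j, ∃ c : ℤ,
      (B ^ (Fintype.card V * (Fintype.card G - 1))) i j = c • uG G := by
  have hFF : F * F⁻¹ = 1 := Matrix.mul_nonsing_inv F hF
  have hFF' : F⁻¹ * F = 1 := Matrix.nonsing_inv_mul F hF
  -- permutation matrices form a multiplicative family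
  have hperm_one : permMatC G 1 = 1 := by
    ext h k
    simp [permMatC, Matrix.one_apply, eq_comm]
  have hperm_mul : ∀ g g' : G, permMatC G g * permMatC G g' = permMatC G (g * g') := by
    intro g g'
    ext h k
    rw [Matrix.mul_apply, Finset.sum_eq_single (h * g)]
    · simp [permMatC, mul_assoc]
    · intro b _ hb
      simp [permMatC, hb]
    · simp
  -- the conjugated representation as a monoid hom
  set ρ : G →* Matrix G G ℂ :=
    { toFun := fun g => F⁻¹ * permMatC G g * F
      map_one' := by
        show F⁻¹ * permMatC G 1 * F = 1
        rw [hperm_one]; simp [hFF']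
      map_mul' := by
        intro g g'
        show F⁻¹ * permMatC G (g * g') * F
          = (F⁻¹ * permMatC G g * F) * (F⁻¹ * permMatC G g' * F)
        rw [← hperm_mul g g']
        calc F⁻¹ * (permMatC G g * permMatC G g') * F
            = F⁻¹ * permMatC G g * (F * F⁻¹) * permMatC G g' * F := by
              rw [hFF]; noncomm_ring
          _ = F⁻¹ * permMatC G g * F * (F⁻¹ * permMatC G g' * F) := by noncomm_ring }
    with hρdef
  set φ : MonoidAlgebra ℤ G →ₐ[ℤ] Matrix G G ℂ :=
    MonoidAlgebra.lift ℤ (Matrix G G ℂ) G ρ with hφdef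
  have hφM : ∀ x : MonoidAlgebra ℤ G,
      φ x = ∑ g : G, (x.coeff g : ℂ) • (F⁻¹ * permMatC G g * F) := by
    intro x
    rw [hφdef, MonoidAlgebra.lift_apply, Finsupp.sum_fintype _ _ (by intro a; simp)]
    refine Finset.sum_congr rfl fun g _ => ?_
    rw [hρdef]
    simp [Int.cast_smul_eq_zsmul]
  have hφ : ∀ (x : MonoidAlgebra ℤ G) (h k : G),
      φ x h k = ∑ g : G, (x.coeff g : ℂ) * (F⁻¹ * permMatC G g * F) h k := by
    intro x h k
    rw [hφM x]
    simp [Matrix.sum_apply]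
  -- the nilpotent block matrix
  set Q' : Matrix (V × {h : G // h ≠ 1}) (V × {h : G // h ≠ 1}) ℂ :=
    ∑ g : G, ((coeffMat g B).map (Int.cast : ℤ → ℂ)) ⊗ₖ Q g with hQ'def
  have hQ'app : ∀ (i j : V) (a b : {h : G // h ≠ 1}),
      Q' (i, a) (j, b) = ∑ g : G, (((B i j).coeff g : ℂ)) * Q g a b := by
    intro i j a b
    rw [hQ'def]
    simp [Matrix.sum_apply, coeffMat, Matrix.map_apply]
  -- main induction
  have key : ∀ (m : ℕ) (i j : V) (h : G) (hh : h ≠ 1) (k : G),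
      φ ((B ^ m) i j) h k =
        if hk : k = 1 then 0 else (Q' ^ m) (i, ⟨h, hh⟩) (j, ⟨k, hk⟩) := by
    intro m
    induction m with
    | zero =>
      intro i j h hh k
      rcases eq_or_ne i j with hij | hij
      · subst hij
        rw [pow_zero, Matrix.one_apply_eq, _root_.map_one]
        by_cases hk : k = 1
        · subst hk
          simp [Matrix.one_apply_ne hh]
        · simp only [hk, dif_neg, pow_zero]
          simp [Matrix.one_apply, Prod.ext_iff, Subtype.ext_iff]
      · rw [pow_zero, Matrix.one_apply_ne hij, _root_.map_zero]
        by_cases hk : k = 1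
        · simp [hk]
        · simp only [hk, dif_neg, pow_zero]
          simp [Matrix.one_apply, Prod.ext_iff, hij]
    | succ m ih =>
      intro i j h hh k
      have hmul : (B ^ (m + 1)) i j = ∑ j' : V, (B ^ m) i j' * B j' j := by
        rw [pow_succ, Matrix.mul_apply]
      rw [hmul, map_sum, Matrix.sum_apply]
      have hterm : ∀ j' : V,
          φ ((B ^ m) i j' * B j' j) h k
            = ∑ k' : G, φ ((B ^ m) i j') h k' * φ (B j' j) k' k := by
        intro j'
        rw [_root_.map_mul, Matrix.mul_apply]
      simp only [hterm]
      by_cases hk : k = 1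
      · subst hk
        rw [dif_pos rfl]
        refine Finset.sum_eq_zero fun j' _ => Finset.sum_eq_zero fun k' _ => ?_
        by_cases hk' : k' = 1
        · subst hk'
          rw [ih i j' h hh 1, dif_pos rfl, zero_mul]
        · have : φ (B j' j) k' 1 = 0 := by
            rw [hφ]
            exact Finset.sum_eq_zero fun g _ => by
              rw [(hblock g).2 k' hk', mul_zero]
          rw [this, mul_zero]
      · rw [dif_neg hk]
        have hR : (Q' ^ (m + 1)) (i, ⟨h, hh⟩) (j, ⟨k, hk⟩)
            = ∑ j' : V, ∑ a : {h : G // h ≠ 1},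
                (Q' ^ m) (i, ⟨h, hh⟩) (j', a) * Q' (j', a) (j, ⟨k, hk⟩) := by
          rw [pow_succ, Matrix.mul_apply, ← Finset.univ_product_univ, Finset.sum_product]
        rw [hR]
        refine Finset.sum_congr rfl fun j' _ => ?_
        have inner : ∀ k' : G,
            φ ((B ^ m) i j') h k' * φ (B j' j) k' k
              = if hk' : k' = 1 then 0 else
                  (Q' ^ m) (i, ⟨h, hh⟩) (j', ⟨k', hk'⟩) * Q' (j', ⟨k', hk'⟩) (j, ⟨k, hk⟩) := by
          intro k'
          by_cases hk' : k' = 1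
          · subst hk'
            rw [dif_pos rfl, ih i j' h hh 1, dif_pos rfl, zero_mul]
          · rw [dif_neg hk', ih i j' h hh k', dif_neg hk']
            congr 1
            rw [hφ, hQ'app]
            refine Finset.sum_congr rfl fun g _ => ?_
            rw [hQ g ⟨k', hk'⟩ ⟨k, hk⟩]
        simp only [inner]
        rw [show (∑ k' : G, if hk' : k' = 1 then 0 else
              (Q' ^ m) (i, ⟨h, hh⟩) (j', ⟨k', hk'⟩) * Q' (j', ⟨k', hk'⟩) (j, ⟨k, hk⟩))
            = ∑ a : {h : G // h ≠ 1},
              (Q' ^ m) (i, ⟨h, hh⟩) (j', a) * Q' (j', a) (j, ⟨k, hk⟩) from ?_]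
        · have := sum_subtype_ne_one
            (fun k' : G => if hk' : k' = 1 then 0 else
              (Q' ^ m) (i, ⟨h, hh⟩) (j', ⟨k', hk'⟩) * Q' (j', ⟨k', hk'⟩) (j, ⟨k, hk⟩))
            (by simp)
          rw [this]
          refine Finset.sum_congr rfl fun a _ => ?_
          exact dif_neg a.2
  -- the power of the nilpotent block vanishes
  set kk := Fintype.card V * (Fintype.card G - 1) with hkk
  have hcard : Fintype.card (V × {h : G // h ≠ 1}) = kk := by
    have h1 : Fintype.card {h : G // h ≠ 1} = Fintype.card G - 1 := by
      simp [Fintype.card_subtype_eq]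
    rw [Fintype.card_prod, h1, hkk]
  have hQk : Q' ^ kk = 0 := by
    rw [← hcard]
    exact matrix_pow_card_eq_zero Q' hnil
  intro i j
  set x : MonoidAlgebra ℤ G := (B ^ kk) i j with hx
  have hrows : ∀ h : G, h ≠ 1 → ∀ k : G, φ x h k = 0 := by
    intro h hh k
    rw [hx, key kk i j h hh k]
    by_cases hk : k = 1
    · simp [hk]
    · rw [dif_neg hk, hQk]
      simp
  -- recover that all coefficients of x are equal
  set Px : Matrix G G ℂ := ∑ g : G, (x.coeff g : ℂ) • permMatC G g with hPxdef
  have hφx : φ x = F⁻¹ * Px * F := by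
    rw [hφM x, hPxdef, Finset.mul_sum, Finset.sum_mul]
    refine Finset.sum_congr rfl fun g _ => ?_
    rw [Matrix.mul_smul, Matrix.smul_mul]
  have hPxF : Px = F * φ x * F⁻¹ := by
    rw [hφx]
    have h2 : F * (F⁻¹ * Px * F) * F⁻¹ = (F * F⁻¹) * Px * (F * F⁻¹) := by noncomm_ring
    rw [h2, hFF, one_mul, mul_one]
  have hPxrow : ∀ h k : G, Px h k = Px 1 k := by
    intro h k
    rw [hPxF]
    rw [Matrix.mul_apply, Matrix.mul_apply]
    refine Finset.sum_congr rfl fun m _ => ?_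
    congr 1
    rw [Matrix.mul_apply, Matrix.mul_apply]
    refine Finset.sum_congr rfl fun t _ => ?_
    by_cases ht : t = 1
    · subst ht; rw [hFone h, hFone 1]
    · rw [hrows t ht, mul_zero, mul_zero]
  have hPxent : ∀ h k : G, Px h k = (x.coeff (h⁻¹ * k) : ℂ) := by
    intro h k
    rw [hPxdef, Matrix.sum_apply]
    have : ∀ g : G, ((x.coeff g : ℂ) • permMatC G g) h k
        = if g = h⁻¹ * k then (x.coeff g : ℂ) else 0 := by
      intro g
      rw [Matrix.smul_apply]
      simp only [permMatC, smul_eq_mul, mul_ite, mul_one, mul_zero]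
      congr 1
      simp [eq_comm, eq_inv_mul_iff_mul_eq]
    simp only [this]
    rw [Finset.sum_ite_eq' Finset.univ (h⁻¹ * k) (fun g => (x.coeff g : ℂ))]
    simp
  have hcoeff : ∀ g : G, x.coeff g = x.coeff 1 := by
    intro g
    have h1 := hPxrow g⁻¹ 1
    rw [hPxent, hPxent] at h1
    simpa using (Int.cast_injective h1 : x.coeff (g⁻¹⁻¹ * 1) = x.coeff (1⁻¹ * 1))
  refine ⟨x.coeff 1, ?_⟩
  show x = x.coeff 1 • uG G
  ext g
  have huG : (uG G).coeff g = 1 := by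
    rw [uG]
    rw [MonoidAlgebra.coeff_sum, Finsupp.finset_sum_apply]
    simp [Finsupp.single_apply]
  rw [MonoidAlgebra.coeff_smul_apply, huG, hcoeff g]
  simp
end

section
/- Let G be a finite group acting by graph automorphisms on a finite directed graph with adjacency matrix A ∈ ℤ≥0^{V×V} (so A_{g·i,g·j} = A_{i,j}). The induced action on the dimension group (the direct limit of ℤ^V → ℤ^V under right multiplication by A) is trivial if and only if there exists ℓ ∈ ℕ such that (A^ℓ)_{i,j} = (A^ℓ)_{i,g·j} for all g ∈ G and i, j ∈ V. -/
open Matrix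

private lemma pow_inv_aux {G V : Type*} [Group G] [Fintype V] [DecidableEq V] [MulAction G V]
    (A : Matrix V V ℤ)
    (hAinv : ∀ (g : G) (i j : V), A (g • i) (g • j) = A i j) :
    ∀ (ℓ : ℕ) (g : G) (i j : V), (A ^ ℓ) (g • i) (g • j) = (A ^ ℓ) i j := by
  intro ℓ
  induction ℓ with
  | zero =>
    intro g i j
    simp only [pow_zero, Matrix.one_apply]
    simp [smul_left_cancel_iff]
  | succ n ih =>
    intro g i j
    rw [pow_succ, Matrix.mul_apply, Matrix.mul_apply]
    refine Fintype.sum_equiv (MulAction.toPerm g⁻¹) _ _ ?_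
    intro k
    simp only [MulAction.toPerm_apply]
    rw [← ih g i (g⁻¹ • k), smul_inv_smul, ← hAinv g (g⁻¹ • k) j, smul_inv_smul]

/-- Inertness of a free action by graph automorphisms.  Triviality of the
induced action on the dimension group `D_A = lim (ℤ^V →^A ℤ^V → ⋯)` unwinds
to: for every `w ∈ ℤ^V` and `g ∈ G` there is `ℓ` with `wA^ℓ = (g·w)A^ℓ`,
where `(g·w)_i = w_{g⁻¹·i}`. -/
theorem dimension_action_trivial_iff {G V : Type*} [Group G] [Fintype G]
    [Fintype V] [DecidableEq V] [MulAction G V]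
    (hfree : ∀ g : G, g ≠ 1 → ∀ v : V, g • v ≠ v)
    (A : Matrix V V ℤ) (hApos : ∀ i j, 0 ≤ A i j)
    (hAinv : ∀ (g : G) (i j : V), A (g • i) (g • j) = A i j) :
    (∀ (w : V → ℤ) (g : G), ∃ ℓ : ℕ,
        Matrix.vecMul w (A ^ ℓ) = Matrix.vecMul (fun i => w (g⁻¹ • i)) (A ^ ℓ))
      ↔ ∃ ℓ : ℕ, ∀ (g : G) (i j : V), (A ^ ℓ) i j = (A ^ ℓ) i (g • j) := by
  have hpow := pow_inv_aux A hAinv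
  constructor
  · intro h
    -- row equality at some level for each (g, i)
    have key : ∀ p : G × V, ∃ ℓ : ℕ, ∀ j : V,
        (A ^ ℓ) p.2 j = (A ^ ℓ) (p.1 • p.2) j := by
      rintro ⟨g, i⟩
      obtain ⟨ℓ, hℓ⟩ := h (fun k => if k = i then (1 : ℤ) else 0) g
      refine ⟨ℓ, fun j => ?_⟩
      have h1 := congrFun hℓ j
      simp only [Matrix.vecMul, dotProduct, ite_mul, one_mul, zero_mul] at h1
      rw [Finset.sum_ite_eq' Finset.univ i] at h1
      have h2 : ∀ k : V, (g⁻¹ • k = i) = (k = g • i) := by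
        intro k
        simp only [eq_iff_iff, inv_smul_eq_iff]
      simp only [h2] at h1
      rw [Finset.sum_ite_eq' Finset.univ (g • i)] at h1
      simpa using h1
    choose f hf using key
    set L : ℕ := Finset.univ.sup f with hL
    have hrow : ∀ (g : G) (i j : V), (A ^ L) i j = (A ^ L) (g • i) j := by
      intro g i j
      have hle : f (g, i) ≤ L := Finset.le_sup (Finset.mem_univ (g, i))
      obtain ⟨m, hm⟩ := Nat.exists_eq_add_of_le hle
      rw [hm, pow_add, Matrix.mul_apply, Matrix.mul_apply]
      refine Finset.sum_congr rfl fun k _ => ?_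
      rw [hf (g, i) k]
    refine ⟨L, fun g i j => ?_⟩
    have e1 : (A ^ L) i (g • j) = (A ^ L) (g⁻¹ • i) j := by
      have := hpow L g (g⁻¹ • i) j
      rw [smul_inv_smul] at this
      exact this
    rw [e1]
    exact hrow g⁻¹ i j
  · rintro ⟨ℓ, hℓ⟩ w g
    refine ⟨ℓ, ?_⟩
    funext j
    simp only [Matrix.vecMul, dotProduct]
    refine Fintype.sum_equiv (MulAction.toPerm g) _ _ ?_
    intro k
    simp only [MulAction.toPerm_apply, inv_smul_smul]
    congr 1
    rw [hℓ g (g • k) j, hpow ℓ g k j]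
end

section
/- Let G be a finite group, and let A be an irreducible square matrix over ℤ≥0[G] indexed by V. For i ∈ V, define W_i(A) := {g ∈ G : ∃ n ∈ ℕ, π_g((A^n)_{i,i}) > 0}. Then W_i(A) is a subgroup of G, and for any i, j ∈ V the subgroups W_i(A) and W_j(A) are conjugate in G. -/
open MonoidAlgebra Matrix

lemma coeff_mul_nonneg {G : Type*} [Group G] (f f' : MonoidAlgebra ℤ G)
    (hf : ∀ g, 0 ≤ f.coeff g) (hf' : ∀ g, 0 ≤ f'.coeff g) (x : G) : 0 ≤ (f * f').coeff x := by
  classical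
  rw [MonoidAlgebra.mul_apply]
  simp only [Finsupp.sum]
  refine Finset.sum_nonneg fun a _ => Finset.sum_nonneg fun b _ => ?_
  split
  · exact mul_nonneg (hf a) (hf' b)
  · exact le_rfl

lemma coeff_mul_le {G : Type*} [Group G] (f f' : MonoidAlgebra ℤ G)
    (hf : ∀ g, 0 ≤ f.coeff g) (hf' : ∀ g, 0 ≤ f'.coeff g) (a b : G) :
    f.coeff a * f'.coeff b ≤ (f * f').coeff (a * b) := by
  classical
  by_cases ha : f.coeff a = 0
  · rw [ha, zero_mul]; exact coeff_mul_nonneg f f' hf hf' _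
  by_cases hb : f'.coeff b = 0
  · rw [hb, mul_zero]; exact coeff_mul_nonneg f f' hf hf' _
  have ha' : a ∈ f.coeff.support := Finsupp.mem_support_iff.2 ha
  have hb' : b ∈ f'.coeff.support := Finsupp.mem_support_iff.2 hb
  rw [MonoidAlgebra.mul_apply]
  simp only [Finsupp.sum]
  have inner : f.coeff a * f'.coeff b ≤ ∑ a₂ ∈ f'.coeff.support, if a * a₂ = a * b then f.coeff a * f'.coeff a₂ else 0 := by
    have hnn : ∀ x ∈ f'.coeff.support, 0 ≤ if a * x = a * b then f.coeff a * f'.coeff x else 0 := by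
      intro x _
      split
      · exact mul_nonneg (hf a) (hf' x)
      · exact le_rfl
    have h := Finset.single_le_sum
      (f := fun a₂ => if a * a₂ = a * b then f.coeff a * f'.coeff a₂ else 0) hnn hb'
    simpa using h
  refine le_trans inner ?_
  have hnn2 : ∀ x ∈ f.coeff.support,
      0 ≤ ∑ a₂ ∈ f'.coeff.support, if x * a₂ = a * b then f.coeff x * f'.coeff a₂ else 0 := by
    intro x _
    refine Finset.sum_nonneg fun y _ => ?_
    split
    · exact mul_nonneg (hf x) (hf' y)
    · exact le_rfl
  exact Finset.single_le_sum
    (f := fun a₁ => ∑ a₂ ∈ f'.coeff.support, if a₁ * a₂ = a * b then f.coeff a₁ * f'.coeff a₂ else 0)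
    hnn2 ha'

theorem weight_subgroup_and_conjugacy {G V : Type*} [Group G] [Fintype G]
    [Fintype V] [DecidableEq V]
    (A : Matrix V V (MonoidAlgebra ℤ G))
    (hpos : ∀ i j (g : G), 0 ≤ (A i j).coeff g)
    (hirr : ∀ i j, ∃ n : ℕ, (A ^ n) i j ≠ 0) :
    -- each weight set `W_i(A) = {g | ∃ n, π_g((A^n)_{i,i}) > 0}` is a subgroup
    (∀ i : V, ∃ Wi : Subgroup G,
        ∀ g : G, g ∈ Wi ↔ ∃ n : ℕ, 0 < ((A ^ n) i i).coeff g) ∧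
    -- and any two weight sets are conjugate in `G`
    (∀ i j : V, ∃ c : G, ∀ g : G,
        (∃ n : ℕ, 0 < ((A ^ n) j j).coeff g) ↔
          ∃ n : ℕ, 0 < ((A ^ n) i i).coeff (c⁻¹ * g * c)) := by
  classical
  -- nonnegativity of all coefficients of all powers
  have hN : ∀ (n : ℕ) (i j : V) (g : G), 0 ≤ ((A ^ n) i j).coeff g := by
    intro n
    induction n with
    | zero =>
      intro i j g
      rcases eq_or_ne i j with h | h
      · subst h
        rw [pow_zero, Matrix.one_apply_eq, MonoidAlgebra.one_def, MonoidAlgebra.coeff_single, Finsupp.single_apply]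
        split <;> norm_num
      · simp [pow_zero, Matrix.one_apply_ne h]
    | succ n ih =>
      intro i j g
      rw [pow_succ, Matrix.mul_apply, MonoidAlgebra.coeff_sum, Finset.sum_apply']
      exact Finset.sum_nonneg fun k _ => coeff_mul_nonneg _ _ (ih i k) (hpos k j) g
  -- multiplicativity of positive weights along paths
  have hM : ∀ (m n : ℕ) (i j k : V) (g h : G),
      0 < ((A ^ m) i j).coeff g → 0 < ((A ^ n) j k).coeff h → 0 < ((A ^ (m + n)) i k).coeff (g * h) := by
    intro m n i j k g h h1 h2
    have key : ((A ^ m) i j).coeff g * ((A ^ n) j k).coeff h ≤ ((A ^ (m + n)) i k).coeff (g * h) := by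
      rw [pow_add, Matrix.mul_apply, MonoidAlgebra.coeff_sum, Finset.sum_apply']
      refine le_trans (coeff_mul_le _ _ (hN m i j) (hN n j k) g h) ?_
      exact Finset.single_le_sum
        (f := fun l => ((A ^ m) i l * (A ^ n) l k).coeff (g * h))
        (fun l _ => coeff_mul_nonneg _ _ (hN m i l) (hN n l k) _) (Finset.mem_univ j)
    exact lt_of_lt_of_le (mul_pos h1 h2) key
  -- basic closure properties of the weight sets
  have hone : ∀ i : V, ∃ n : ℕ, 0 < ((A ^ n) i i).coeff (1 : G) := by
    intro i
    refine ⟨0, ?_⟩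
    rw [pow_zero, Matrix.one_apply_eq, MonoidAlgebra.one_def]
    simp
  have hmul : ∀ (i : V) (g h : G), (∃ n, 0 < ((A ^ n) i i).coeff g) → (∃ n, 0 < ((A ^ n) i i).coeff h) →
      ∃ n, 0 < ((A ^ n) i i).coeff (g * h) := by
    rintro i g h ⟨m, hm⟩ ⟨n, hn⟩
    exact ⟨m + n, hM m n i i i g h hm hn⟩
  have hpow : ∀ (i : V) (g : G) (k : ℕ), (∃ n, 0 < ((A ^ n) i i).coeff g) →
      ∃ n, 0 < ((A ^ n) i i).coeff (g ^ k) := by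
    intro i g k hg
    induction k with
    | zero => simpa using hone i
    | succ k ih =>
      have := hmul i (g ^ k) g ih hg
      simpa [pow_succ] using this
  have hinv : ∀ (i : V) (g : G), (∃ n, 0 < ((A ^ n) i i).coeff g) →
      ∃ n, 0 < ((A ^ n) i i).coeff g⁻¹ := by
    intro i g hg
    have hk : 0 < orderOf g := orderOf_pos g
    have hmul1 : g * g ^ (orderOf g - 1) = 1 := by
      rw [← pow_succ', Nat.sub_add_cancel hk]
      exact pow_orderOf_eq_one g
    have hginv : g⁻¹ = g ^ (orderOf g - 1) := inv_eq_of_mul_eq_one_right hmul1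
    rw [hginv]
    exact hpow i g _ hg
  constructor
  · intro i
    refine ⟨{ carrier := {g | ∃ n : ℕ, 0 < ((A ^ n) i i).coeff g},
              one_mem' := hone i,
              mul_mem' := fun ha hb => hmul i _ _ ha hb,
              inv_mem' := fun ha => hinv i _ ha }, fun g => Iff.rfl⟩
  · intro i j
    obtain ⟨n, hn⟩ := hirr i j
    obtain ⟨c, hc0⟩ := Finsupp.ne_iff.1 (fun h => hn (MonoidAlgebra.coeff_injective (h.trans MonoidAlgebra.coeff_zero.symm)))
    have hc : 0 < ((A ^ n) i j).coeff c := lt_of_le_of_ne (hN n i j c) (by simpa using (Ne.symm hc0))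
    obtain ⟨m, hm⟩ := hirr j i
    obtain ⟨d, hd0⟩ := Finsupp.ne_iff.1 (fun h => hm (MonoidAlgebra.coeff_injective (h.trans MonoidAlgebra.coeff_zero.symm)))
    have hd : 0 < ((A ^ m) j i).coeff d := lt_of_le_of_ne (hN m j i d) (by simpa using (Ne.symm hd0))
    refine ⟨c⁻¹, fun g => ?_⟩
    constructor
    · rintro ⟨k, hk⟩
      have h1 : ∃ N, 0 < ((A ^ N) i i).coeff (c * g * d) :=
        ⟨n + k + m, hM (n + k) m i j i (c * g) d (hM n k i j j c g hc hk) hd⟩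
      have h2 : ∃ N, 0 < ((A ^ N) i i).coeff (c * d) := ⟨n + m, hM n m i j i c d hc hd⟩
      have h3 := hinv i _ h2
      have h4 := hmul i _ _ h1 h3
      have e : c * g * d * (c * d)⁻¹ = c⁻¹⁻¹ * g * c⁻¹ := by group
      rwa [e] at h4
    · rintro ⟨k, hk⟩
      have hk' : 0 < ((A ^ k) i i).coeff (c * g * c⁻¹) := by
        have e : c⁻¹⁻¹ * g * c⁻¹ = c * g * c⁻¹ := by group
        rwa [e] at hk
      have h1 : ∃ N, 0 < ((A ^ N) j j).coeff (d * (c * g * c⁻¹) * c) :=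
        ⟨m + k + n, hM (m + k) n j i j (d * (c * g * c⁻¹)) c
          (hM m k j i i d (c * g * c⁻¹) hd hk') hc⟩
      have e : d * (c * g * c⁻¹) * c = d * c * g := by group
      rw [e] at h1
      have h2 : ∃ N, 0 < ((A ^ N) j j).coeff (d * c) := ⟨m + n, hM m n j i j d c hd hc⟩
      have h3 := hmul j _ _ (hinv j _ h2) h1
      have e2 : (d * c)⁻¹ * (d * c * g) = g := by group
      rwa [e2] at h3
end

section
/- Let G be a finite group and let A be an irreducible square matrix over ℤ≥0[G]. Then for every k ∈ ℕ, the weight group satisfies W_i(A^{k|G|+1}) = W_i(A) for every index i. In particular, if g ∈ G satisfies π_g((A^ℓ)_{i,i}) > 0 for some ℓ, then π_g((A^{ℓ(k|G|+1)})_{i,i}) > 0. -/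
open MonoidAlgebra Matrix

private lemma MA_mul_nonneg {G : Type*} [Group G] (f h : MonoidAlgebra ℤ G)
    (hf : ∀ g, 0 ≤ f.coeff g) (hh : ∀ g, 0 ≤ h.coeff g) (x : G) : 0 ≤ (f * h).coeff x := by
  classical
  rw [MonoidAlgebra.coeff_mul]
  refine Finset.sum_nonneg fun a _ => Finset.sum_nonneg fun b _ => ?_
  beta_reduce
  split
  · exact mul_nonneg (hf a) (hh b)
  · exact le_refl 0

private lemma MA_mul_pos {G : Type*} [Group G] (f h : MonoidAlgebra ℤ G)
    (hf : ∀ g, 0 ≤ f.coeff g) (hh : ∀ g, 0 ≤ h.coeff g) (a b : G)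
    (ha : 0 < f.coeff a) (hb : 0 < h.coeff b) : 0 < (f * h).coeff (a * b) := by
  classical
  rw [MonoidAlgebra.coeff_mul]
  have hamem : a ∈ f.coeff.support := Finsupp.mem_support_iff.mpr ha.ne'
  have hbmem : b ∈ h.coeff.support := Finsupp.mem_support_iff.mpr hb.ne'
  refine Finset.sum_pos' (fun x _ => Finset.sum_nonneg fun y _ => ?_) ⟨a, hamem, ?_⟩
  · beta_reduce
    split
    · exact mul_nonneg (hf x) (hh y)
    · exact le_refl 0
  · refine Finset.sum_pos' (fun y _ => ?_) ⟨b, hbmem, ?_⟩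
    · beta_reduce
      split
      · exact mul_nonneg (hf a) (hh y)
      · exact le_refl 0
    · beta_reduce
      rw [if_pos rfl]
      exact mul_pos ha hb

theorem weight_group_of_power {G V : Type*} [Group G] [Fintype G]
    [Fintype V] [DecidableEq V]
    (A : Matrix V V (MonoidAlgebra ℤ G))
    (hpos : ∀ i j (g : G), 0 ≤ (A i j).coeff g)
    (hirr : ∀ i j, ∃ n : ℕ, (A ^ n) i j ≠ 0) :
    (∀ (k : ℕ) (i : V) (g : G),
        (∃ n : ℕ, 0 < (((A ^ (k * Fintype.card G + 1)) ^ n) i i).coeff g) ↔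
          ∃ n : ℕ, 0 < ((A ^ n) i i).coeff g) ∧
    (∀ (k ℓ : ℕ) (i : V) (g : G), 0 < ((A ^ ℓ) i i).coeff g →
        0 < ((A ^ (ℓ * (k * Fintype.card G + 1))) i i).coeff g) := by
  classical
  -- all coefficients of all powers are nonneg
  have hnn : ∀ (n : ℕ) (i j : V) (g : G), 0 ≤ ((A ^ n) i j).coeff g := by
    intro n
    induction n with
    | zero =>
      intro i j g
      simp only [pow_zero, Matrix.one_apply]
      split
      · simp only [MonoidAlgebra.one_def]
        rw [MonoidAlgebra.coeff_single, Finsupp.single_apply]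
        split <;> norm_num
      · simp
    | succ n ih =>
      intro i j g
      rw [pow_succ, Matrix.mul_apply]
      have : ((∑ k, (A ^ n) i k * A k j) : MonoidAlgebra ℤ G).coeff g
          = ∑ k, ((A ^ n) i k * A k j).coeff g := by
        rw [MonoidAlgebra.coeff_sum]; exact Finsupp.finset_sum_apply _ _ _
      rw [this]
      exact Finset.sum_nonneg fun x _ => MA_mul_nonneg _ _ (ih i x) (hpos x j) g
  -- matrix multiplication positivity at the diagonal
  have hmul : ∀ (m n : ℕ) (i : V) (a b : G), 0 < ((A ^ m) i i).coeff a → 0 < ((A ^ n) i i).coeff b →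
      0 < ((A ^ (m + n)) i i).coeff (a * b) := by
    intro m n i a b ha hb
    rw [pow_add, Matrix.mul_apply]
    have hsum : ((∑ k, (A ^ m) i k * (A ^ n) k i) : MonoidAlgebra ℤ G).coeff (a * b)
        = ∑ k, ((A ^ m) i k * (A ^ n) k i).coeff (a * b) := by rw [MonoidAlgebra.coeff_sum]; exact Finsupp.finset_sum_apply _ _ _
    rw [hsum]
    refine Finset.sum_pos' (fun x _ => MA_mul_nonneg _ _ (hnn m i x) (hnn n x i) _)
      ⟨i, Finset.mem_univ i, MA_mul_pos _ _ (hnn m i i) (hnn n i i) a b ha hb⟩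
  -- key step : powers
  have hstep : ∀ (ℓ m : ℕ) (i : V) (g : G), 0 < ((A ^ ℓ) i i).coeff g →
      0 < ((A ^ (ℓ * m)) i i).coeff (g ^ m) := by
    intro ℓ m i g hg
    induction m with
    | zero =>
      simp only [Nat.mul_zero, pow_zero, Matrix.one_apply_eq, MonoidAlgebra.one_def]
      rw [MonoidAlgebra.coeff_single, Finsupp.single_apply, if_pos rfl]
      norm_num
    | succ m ih =>
      have := hmul (ℓ * m) ℓ i (g ^ m) g ih hg
      rwa [← pow_succ, ← Nat.mul_succ] at this
  have hsecond : ∀ (k ℓ : ℕ) (i : V) (g : G), 0 < ((A ^ ℓ) i i).coeff g →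
      0 < ((A ^ (ℓ * (k * Fintype.card G + 1))) i i).coeff g := by
    intro k ℓ i g hg
    have := hstep ℓ (k * Fintype.card G + 1) i g hg
    have hg' : g ^ (k * Fintype.card G + 1) = g := by
      rw [pow_succ, pow_mul, pow_card_eq_one, one_mul]
    rwa [hg'] at this
  refine ⟨fun k i g => ⟨?_, ?_⟩, hsecond⟩
  · rintro ⟨n, hn⟩
    exact ⟨(k * Fintype.card G + 1) * n, by rw [pow_mul]; exact hn⟩
  · rintro ⟨n, hn⟩
    refine ⟨n, ?_⟩
    rw [← pow_mul, Nat.mul_comm]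
    exact hsecond k n i g hn
end
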